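/- (Dowker) Suppose given: a function c assigning to each simplex s of K_R an element c(s) ∈ s; a function ψ̄ assigning to each simplex s of K_R an element ψ̄(s) ∈ Y with x R ψ̄(s) for all x ∈ s; and a function ψ assigning to each simplex t of L_R an element ψ(t) ∈ X with ψ(t) R y for all y ∈ t. For a simplex σ' of K'_R (a finite nonempty chain of simplices of K_R under inclusion) write min σ' for its least element and ψ̄(σ') := {ψ̄(s) : s ∈ σ'}; then ψ̄(σ') is a simplex of L_R. Then for every simplex Σ of the second barycentric subdivision K''_R — i.e., every finite nonempty family of simplices of K'_R totally ordered by inclusion — the set {c(min σ') : σ' ∈ Σ} ∪ {ψ(ψ̄(σ')) : σ' ∈ Σ} is a simplex of K_R. That is, the two simplicial maps φ_K∘φ'_K and ψ∘ψ̄' from K''_R to K_R are contiguous. -/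

import Mathlib

/-- A simplex of the Dowker complex `K_R`. -/
def KSimp {X Y : Type*} (R : X → Y → Prop) (s : Set X) : Prop :=
  s.Finite ∧ s.Nonempty ∧ ∃ y : Y, ∀ x ∈ s, R x y

/-- A simplex of the dual Dowker complex `L_R`. -/
def LSimp {X Y : Type*} (R : X → Y → Prop) (t : Set Y) : Prop :=
  t.Finite ∧ t.Nonempty ∧ ∃ x : X, ∀ y ∈ t, R x y

/-- A simplex of the barycentric subdivision `K'_R`: a finite nonempty chain (under
inclusion) of simplices of `K_R`. -/
def KSubSimp {X Y : Type*} (R : X → Y → Prop) (σ' : Set (Set X)) : Prop :=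
  σ'.Finite ∧ σ'.Nonempty ∧ (∀ s ∈ σ', KSimp R s) ∧ IsChain (· ⊆ ·) σ'

/-- Dowker: given choice functions `c` (choosing a vertex of each simplex of
`K_R`), `ψb = ψ̄` (assigning to each simplex `s` of `K_R` an element of `Y` related to all of
`s`) and `ψ` (assigning to each simplex `t` of `L_R` an element of `X` related to all of
`t`), and a function `m` picking out the least vertex of each simplex of `K'_R`, we have:
`ψ̄` maps simplices of `K'_R` to simplices of `L_R`, and for every simplex `S` of the second
barycentric subdivision `K''_R`, the set
`{c (min σ') : σ' ∈ S} ∪ {ψ (ψ̄ σ') : σ' ∈ S}` is a simplex of `K_R`; that is, the two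
simplicial maps `φ_K ∘ φ'_K` and `ψ ∘ ψ̄'` from `K''_R` to `K_R` are contiguous. -/
theorem dowker_contiguous {X Y : Type*} (R : X → Y → Prop)
    (c : Set X → X) (hc : ∀ s : Set X, KSimp R s → c s ∈ s)
    (ψb : Set X → Y) (hψb : ∀ s : Set X, KSimp R s → ∀ x ∈ s, R x (ψb s))
    (ψ : Set Y → X) (hψ : ∀ t : Set Y, LSimp R t → ∀ y ∈ t, R (ψ t) y)
    (m : Set (Set X) → Set X)
    (hm : ∀ σ' : Set (Set X), KSubSimp R σ' → m σ' ∈ σ' ∧ ∀ s ∈ σ', m σ' ⊆ s) :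
    (∀ σ' : Set (Set X), KSubSimp R σ' → LSimp R (ψb '' σ')) ∧
      ∀ S : Set (Set (Set X)), S.Finite → S.Nonempty → (∀ σ' ∈ S, KSubSimp R σ') →
        IsChain (· ⊆ ·) S →
        KSimp R (((fun σ' => c (m σ')) '' S) ∪ ((fun σ' => ψ (ψb '' σ')) '' S)) := by
  have part1 : ∀ σ' : Set (Set X), KSubSimp R σ' → LSimp R (ψb '' σ') := by
    intro σ' hσ'
    obtain ⟨hfin, hne, hsimp, hchain⟩ := hσ'
    obtain ⟨hmem, hle⟩ := hm σ' ⟨hfin, hne, hsimp, hchain⟩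
    refine ⟨hfin.image _, hne.image _, c (m σ'), ?_⟩
    rintro y ⟨s, hs, rfl⟩
    exact hψb s (hsimp s hs) _ (hle s hs (hc _ (hsimp _ hmem)))
  refine ⟨part1, ?_⟩
  intro S hSfin hSne hSsub hSchain
  -- find the least element σ₀ of the chain S
  obtain ⟨σ₀, hσ₀S, hσ₀min⟩ : ∃ σ₀ ∈ S, ∀ σ' ∈ S, σ' ⊆ σ₀ → σ₀ = σ' := by
    obtain ⟨a, ha, hmin⟩ := Set.Finite.exists_minimalFor id S hSfin hSne
    exact ⟨a, ha, fun b hb h => subset_antisymm (hmin hb h) h⟩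
  have hσ₀le : ∀ σ' ∈ S, σ₀ ⊆ σ' := by
    intro σ' hσ'
    rcases eq_or_ne σ₀ σ' with rfl | hne
    · exact le_refl _
    rcases hSchain hσ₀S hσ' hne with h | h
    · exact h
    · exact (hσ₀min σ' hσ' h).le
  have hσ₀ := hSsub σ₀ hσ₀S
  obtain ⟨hm₀mem, hm₀le⟩ := hm σ₀ hσ₀
  have hm₀simp : KSimp R (m σ₀) := hσ₀.2.2.1 _ hm₀mem
  refine ⟨((hSfin.image _).union (hSfin.image _)),
    ⟨c (m hSne.some), Or.inl ⟨hSne.some, hSne.some_mem, rfl⟩⟩,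
    ψb (m σ₀), ?_⟩
  rintro x (⟨σ', hσ'S, rfl⟩ | ⟨σ', hσ'S, rfl⟩)
  · -- x = c (m σ'); m σ' ⊆ m σ₀ since m σ₀ ∈ σ₀ ⊆ σ'
    have hσ' := hSsub σ' hσ'S
    obtain ⟨hmem', hle'⟩ := hm σ' hσ'
    have h1 : m σ' ⊆ m σ₀ := hle' _ (hσ₀le σ' hσ'S hm₀mem)
    exact hψb (m σ₀) hm₀simp _ (h1 (hc _ (hσ'.2.2.1 _ hmem')))
  · -- x = ψ (ψb '' σ'); ψb (m σ₀) ∈ ψb '' σ'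
    have hσ' := hSsub σ' hσ'S
    exact hψ _ (part1 σ' hσ') _ ⟨m σ₀, hσ₀le σ' hσ'S hm₀mem, rfl⟩
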